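/- Let {W, W̃, Z} be an LTONP data set with Pick operator Λ = WW* − W̃W̃* strictly positive, set P = WW*, B = W E_𝒴, B̃ = W̃ E_𝒰, and let C : 𝒵 → ℰ and D : 𝒴 → ℰ be an admissible pair of complementary operators. Define R∘ = (I_𝒰 + B̃*Λ⁻¹B̃)^{-1/2} and Q∘ = (I_ℰ + C P (Λ⁻¹ − P⁻¹) P C*)^{-1/2}. Then the operator τ₁ = [I_𝒰 ; −Λ^{-1/2} B̃] R∘ : 𝒰 → 𝒰 ⊕ 𝒵 is an isometry whose range equals 𝒢 = {(u, z) ∈ 𝒰 ⊕ 𝒵 : B̃u + Λ^{1/2} z = 0}, and the operator τ₂ = [D* ; Λ^{-1/2} P C*] Q∘ : ℰ → 𝒴 ⊕ 𝒵 is an isometry whose range equals 𝒢′ = {(y, z) ∈ 𝒴 ⊕ 𝒵 : By + ZΛ^{1/2} z = 0}. -/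

import Mathlib

/- Statement 9 (Lemma on the isometries τ₁ and τ₂): Let {W, W̃, Z} be an LTONP data
set with strictly positive Pick operator Λ, P = WW*, B = W E_𝒴, B̃ = W̃ E_𝒰, and let
C : 𝒵 → ℰ, D : 𝒴 → ℰ be an admissible pair of complementary operators.  With
R∘ = (I + B̃*Λ⁻¹B̃)^{-1/2} and Q∘ = (I + CP(Λ⁻¹ − P⁻¹)PC*)^{-1/2}, the operator
τ₁ = [I ; −Λ^{-1/2}B̃]R∘ : 𝒰 → 𝒰 ⊕ 𝒵 is an isometry with range
𝒢 = {(u,z) : B̃u + Λ^{1/2}z = 0}, and τ₂ = [D* ; Λ^{-1/2}PC*]Q∘ : ℰ → 𝒴 ⊕ 𝒵 is an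
isometry with range 𝒢′ = {(y,z) : By + ZΛ^{1/2}z = 0}. -/

open ContinuousLinearMap Filter Topology

noncomputable section

local notation "ℓ²(" X ")" => lp (fun _ : ℕ => X) 2

/-- A bounded operator on a Hilbert space is strictly positive if it is positive
(self-adjoint with non-negative quadratic form) and invertible. -/
def IsStrictlyPositiveOp {H : Type*} [NormedAddCommGroup H] [InnerProductSpace ℂ H]
    [CompleteSpace H] (T : H →L[ℂ] H) : Prop :=
  T.IsPositive ∧ IsUnit T

/-- column operator `[b₁ ; b₂] : A → C ⊕ D`. -/
noncomputable def colC {A C D : Type*}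
    [NormedAddCommGroup A] [InnerProductSpace ℂ A]
    [NormedAddCommGroup C] [InnerProductSpace ℂ C]
    [NormedAddCommGroup D] [InnerProductSpace ℂ D]
    (b₁ : A →L[ℂ] C) (b₂ : A →L[ℂ] D) : A →L[ℂ] WithLp 2 (C × D) :=
  ((WithLp.prodContinuousLinearEquiv 2 ℂ C D).symm).toContinuousLinearMap.comp (b₁.prod b₂)

section AuxLemmas

lemma isUnit_of_isUnit_sq {M : Type*} [Monoid M] {a : M} (h : IsUnit (a * a)) : IsUnit a := by
  obtain ⟨u, hu⟩ := h
  have hc : Commute (↑u) a := by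
    rw [hu]; exact (Commute.refl a).mul_left (Commute.refl a)
  have hc' : Commute (↑u⁻¹ : M) a := hc.units_inv_left
  refine isUnit_iff_exists.mpr ⟨(↑u⁻¹ : M) * a, ?_, ?_⟩
  · rw [← mul_assoc, ← hc'.eq, mul_assoc, ← hu, Units.inv_mul]
  · rw [mul_assoc, ← hu, Units.inv_mul]

lemma ring_inverse_eq_of_mul_eq_one {M : Type*} [MonoidWithZero M] {a b : M}
    (ha : IsUnit a) (h : a * b = 1) : Ring.inverse a = b := by
  calc Ring.inverse a = Ring.inverse a * (a * b) := by rw [h, mul_one]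
  _ = (Ring.inverse a * a) * b := (mul_assoc _ _ _).symm
  _ = b := by rw [Ring.inverse_mul_cancel a ha, one_mul]

lemma mul_middle_one {M : Type*} [MonoidWithZero M] {m r : M} (hm : IsUnit m)
    (hr : r * r = Ring.inverse m) : r * (m * r) = 1 ∧ IsUnit r := by
  have hru : IsUnit r := isUnit_of_isUnit_sq (hr ▸ hm.ringInverse)
  have h2 : m * (r * r) = 1 := by rw [hr, Ring.mul_inverse_cancel m hm]
  obtain ⟨u, rfl⟩ := hru
  have hmu : m * ↑u = ↑u⁻¹ := by
    have := congrArg (fun x => x * (↑u⁻¹ : M)) h2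
    simpa [mul_assoc] using this
  refine ⟨?_, u.isUnit⟩
  rw [hmu, Units.mul_inv]

variable {H K1 K2 : Type*}
  [NormedAddCommGroup H] [InnerProductSpace ℂ H] [CompleteSpace H]
  [NormedAddCommGroup K1] [InnerProductSpace ℂ K1] [CompleteSpace K1]
  [NormedAddCommGroup K2] [InnerProductSpace ℂ K2] [CompleteSpace K2]

lemma isUnit_one_add_of_isPositive {A : H →L[ℂ] H} (hA : A.IsPositive) : IsUnit (1 + A) :=
  CStarAlgebra.isUnit_of_le 1
    (le_add_of_nonneg_right ((nonneg_iff_isPositive A).mpr hA)) ⟨zero_le_one, isUnit_one⟩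

lemma comp_comp_eq {X Y : Type*} [NormedAddCommGroup X] [NormedSpace ℂ X]
    [NormedAddCommGroup Y] [NormedSpace ℂ Y]
    {g h k : Y →L[ℂ] Y} (hk : g.comp h = k) (f : X →L[ℂ] Y) :
    g ∘L (h ∘L f) = k ∘L f := by
  rw [← ContinuousLinearMap.comp_assoc, hk]

omit [CompleteSpace H] in
lemma clm_cancel_apply {f g : H →L[ℂ] H} (h : f * g = 1) (x : H) : f (g x) = x := by
  rw [← ContinuousLinearMap.mul_apply, h, ContinuousLinearMap.one_apply]

omit [CompleteSpace H] [CompleteSpace K1] [CompleteSpace K2] in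
lemma colC_fst (A : H →L[ℂ] K1) (B : H →L[ℂ] K2) (u : H) :
    (WithLp.equiv 2 (K1 × K2) (colC A B u)).1 = A u := rfl

omit [CompleteSpace H] [CompleteSpace K1] [CompleteSpace K2] in
lemma colC_snd (A : H →L[ℂ] K1) (B : H →L[ℂ] K2) (u : H) :
    (WithLp.equiv 2 (K1 × K2) (colC A B u)).2 = B u := rfl

lemma colC_norm_apply (A : H →L[ℂ] K1) (B : H →L[ℂ] K2)
    (h : adjoint A ∘L A + adjoint B ∘L B = 1) (u : H) : ‖colC A B u‖ = ‖u‖ := by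
  have hsq : ‖colC A B u‖ ^ 2 = ‖u‖ ^ 2 := by
    rw [WithLp.prod_norm_sq_eq_of_L2]
    have hf : (colC A B u).fst = A u := rfl
    have hs : (colC A B u).snd = B u := rfl
    rw [hf, hs]
    calc ‖A u‖ ^ 2 + ‖B u‖ ^ 2
        = RCLike.re (inner ℂ (A u) (A u) : ℂ) + RCLike.re (inner ℂ (B u) (B u) : ℂ) := by
          rw [← inner_self_eq_norm_sq (𝕜 := ℂ), ← inner_self_eq_norm_sq (𝕜 := ℂ)]
      _ = RCLike.re ((inner ℂ ((adjoint A ∘L A) u) u : ℂ) + inner ℂ ((adjoint B ∘L B) u) u) := by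
          rw [map_add]
          simp [ContinuousLinearMap.comp_apply, adjoint_inner_left]
      _ = RCLike.re (inner ℂ (((adjoint A ∘L A) + (adjoint B ∘L B)) u) u : ℂ) := by
          rw [ContinuousLinearMap.add_apply, inner_add_left]
      _ = RCLike.re (inner ℂ u u : ℂ) := by rw [h, ContinuousLinearMap.one_apply]
      _ = ‖u‖ ^ 2 := inner_self_eq_norm_sq (𝕜 := ℂ) u
  exact (sq_eq_sq₀ (norm_nonneg _) (norm_nonneg _)).mp hsq

end AuxLemmas

variable {𝒵 𝒴 𝒰 ℰ : Type*}
  [NormedAddCommGroup 𝒵] [InnerProductSpace ℂ 𝒵] [CompleteSpace 𝒵]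
  [NormedAddCommGroup 𝒴] [InnerProductSpace ℂ 𝒴] [CompleteSpace 𝒴]
  [NormedAddCommGroup 𝒰] [InnerProductSpace ℂ 𝒰] [CompleteSpace 𝒰]
  [NormedAddCommGroup ℰ] [InnerProductSpace ℂ ℰ] [CompleteSpace ℰ]

set_option maxHeartbeats 2000000 in
theorem tau_isometries_onto_G_and_G'
    -- the unilateral forward shifts and the embeddings onto the zeroth coordinate
    (S𝒴 : ℓ²(𝒴) →L[ℂ] ℓ²(𝒴)) (S𝒰 : ℓ²(𝒰) →L[ℂ] ℓ²(𝒰))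
    (hS𝒴0 : ∀ x : ℓ²(𝒴), S𝒴 x 0 = 0)
    (hS𝒴1 : ∀ (x : ℓ²(𝒴)) (n : ℕ), S𝒴 x (n + 1) = x n)
    (hS𝒰0 : ∀ x : ℓ²(𝒰), S𝒰 x 0 = 0)
    (hS𝒰1 : ∀ (x : ℓ²(𝒰)) (n : ℕ), S𝒰 x (n + 1) = x n)
    (E𝒴 : 𝒴 →L[ℂ] ℓ²(𝒴)) (E𝒰 : 𝒰 →L[ℂ] ℓ²(𝒰))
    (hE𝒴0 : ∀ y : 𝒴, E𝒴 y 0 = y) (hE𝒴1 : ∀ (y : 𝒴) (n : ℕ), E𝒴 y (n + 1) = 0)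
    (hE𝒰0 : ∀ u : 𝒰, E𝒰 u 0 = u) (hE𝒰1 : ∀ (u : 𝒰) (n : ℕ), E𝒰 u (n + 1) = 0)
    -- the LTONP data set {W, W̃, Z}
    (Z : 𝒵 →L[ℂ] 𝒵) (W : ℓ²(𝒴) →L[ℂ] 𝒵) (Wt : ℓ²(𝒰) →L[ℂ] 𝒵)
    (hW : Z.comp W = W.comp S𝒴) (hWt : Z.comp Wt = Wt.comp S𝒰)
    -- P, Λ, B, B̃
    (P Λ : 𝒵 →L[ℂ] 𝒵) (B : 𝒴 →L[ℂ] 𝒵) (Bt : 𝒰 →L[ℂ] 𝒵)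
    (hP : P = W.comp (adjoint W))
    (hΛ : Λ = W.comp (adjoint W) - Wt.comp (adjoint Wt))
    (hB : B = W.comp E𝒴) (hBt : Bt = Wt.comp E𝒰)
    -- the Pick operator is strictly positive
    (hpos : IsStrictlyPositiveOp Λ)
    -- Λh = Λ^{1/2} is the positive square root of Λ
    (Λh : 𝒵 →L[ℂ] 𝒵) (hΛh : Λh.IsPositive ∧ Λh.comp Λh = Λ)
    -- {C, D} is an admissible pair of complementary operators
    (C : 𝒵 →L[ℂ] ℰ) (D : 𝒴 →L[ℂ] ℰ)
    (hCD1 : D.comp (adjoint D) + C.comp (P.comp (adjoint C)) = 1)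
    (hCD2 : B.comp (adjoint D) + Z.comp (P.comp (adjoint C)) = 0)
    (hCD3 : B.comp (adjoint B) + Z.comp (P.comp (adjoint Z)) = P)
    (hCD4 : (adjoint D).comp D + (adjoint B).comp ((Ring.inverse P).comp B) = 1)
    (hCD5 : (adjoint D).comp C + (adjoint B).comp ((Ring.inverse P).comp Z) = 0)
    (hCD6 : (adjoint C).comp C + (adjoint Z).comp ((Ring.inverse P).comp Z) =
      Ring.inverse P)
    -- R∘ = (I + B̃*Λ⁻¹B̃)^{-1/2} and Q∘ = (I + CP(Λ⁻¹ − P⁻¹)PC*)^{-1/2}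
    (R : 𝒰 →L[ℂ] 𝒰)
    (hR : R.IsPositive ∧
      R.comp R = Ring.inverse (1 + (adjoint Bt).comp ((Ring.inverse Λ).comp Bt)))
    (Q : ℰ →L[ℂ] ℰ)
    (hQ : Q.IsPositive ∧
      Q.comp Q = Ring.inverse (1 + C.comp (P.comp
        (((Ring.inverse Λ - Ring.inverse P)).comp (P.comp (adjoint C)))))) :
    -- τ₁ = [I ; −Λ^{-1/2}B̃] R∘ is an isometry with range 𝒢
    (∀ u : 𝒰, ‖(colC R (-(((Ring.inverse Λh).comp Bt).comp R))) u‖ = ‖u‖) ∧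
    (Set.range (colC R (-(((Ring.inverse Λh).comp Bt).comp R))) =
      {p : WithLp 2 (𝒰 × 𝒵) |
        Bt ((WithLp.equiv 2 (𝒰 × 𝒵)) p).1 + Λh ((WithLp.equiv 2 (𝒰 × 𝒵)) p).2 = 0}) ∧
    -- τ₂ = [D* ; Λ^{-1/2}PC*] Q∘ is an isometry with range 𝒢′
    (∀ x : ℰ,
      ‖(colC ((adjoint D).comp Q)
          (((Ring.inverse Λh).comp (P.comp ((adjoint C).comp Q))))) x‖ = ‖x‖) ∧
    (Set.range (colC ((adjoint D).comp Q)
        (((Ring.inverse Λh).comp (P.comp ((adjoint C).comp Q))))) =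
      {p : WithLp 2 (𝒴 × 𝒵) |
        B ((WithLp.equiv 2 (𝒴 × 𝒵)) p).1 +
          Z (Λh (((WithLp.equiv 2 (𝒴 × 𝒵)) p).2)) = 0}) := by
  clear hS𝒴0 hS𝒴1 hS𝒰0 hS𝒰1 hE𝒴0 hE𝒴1 hE𝒰0 hE𝒰1 hW hWt hB hBt hCD3
  obtain ⟨hΛpos, hΛu⟩ := hpos
  obtain ⟨hΛhpos, hΛh2⟩ := hΛh
  obtain ⟨hRpos, hR2⟩ := hR
  obtain ⟨hQpos, hQ2⟩ := hQ
  -- self-adjointness facts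
  have hΛ_sa : adjoint Λ = Λ := hΛpos.isSelfAdjoint.adjoint_eq
  have hΛh_sa : adjoint Λh = Λh := hΛhpos.isSelfAdjoint.adjoint_eq
  have hR_sa : adjoint R = R := hRpos.isSelfAdjoint.adjoint_eq
  have hQ_sa : adjoint Q = Q := hQpos.isSelfAdjoint.adjoint_eq
  have hP_sa : adjoint P = P := by
    rw [hP, ContinuousLinearMap.adjoint_comp, adjoint_adjoint]
  -- invertibility of Λh and basic cancellations
  have hΛhu : IsUnit Λh := isUnit_of_isUnit_sq (a := Λh)
    (by rw [ContinuousLinearMap.mul_def, hΛh2]; exact hΛu)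
  have hΛhiΛh : Λh * Ring.inverse Λh = 1 := Ring.mul_inverse_cancel Λh hΛhu
  have hiΛhΛh : Ring.inverse Λh * Λh = 1 := Ring.inverse_mul_cancel Λh hΛhu
  have hΛiΛ : Λ * Ring.inverse Λ = 1 := Ring.mul_inverse_cancel Λ hΛu
  have hiΛΛ : Ring.inverse Λ * Λ = 1 := Ring.inverse_mul_cancel Λ hΛu
  have hiΛh_sa : adjoint (Ring.inverse Λh) = Ring.inverse Λh := by
    rw [← ContinuousLinearMap.star_eq_adjoint, ← Ring.inverse_star,
      ContinuousLinearMap.star_eq_adjoint, hΛh_sa]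
  have hiΛ_sa : adjoint (Ring.inverse Λ) = Ring.inverse Λ := by
    rw [← ContinuousLinearMap.star_eq_adjoint, ← Ring.inverse_star,
      ContinuousLinearMap.star_eq_adjoint, hΛ_sa]
  have hsqΛ : (Ring.inverse Λh) * (Ring.inverse Λh) = Ring.inverse Λ := by
    symm
    apply ring_inverse_eq_of_mul_eq_one hΛu
    have hm : Λh * Λh = Λ := by rw [ContinuousLinearMap.mul_def]; exact hΛh2
    calc Λ * (Ring.inverse Λh * Ring.inverse Λh)
        = Λh * (Λh * (Ring.inverse Λh * Ring.inverse Λh)) := by rw [← hm, mul_assoc]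
      _ = Λh * ((Λh * Ring.inverse Λh) * Ring.inverse Λh) := by rw [mul_assoc]
      _ = 1 := by rw [hΛhiΛh, one_mul, hΛhiΛh]
  have hsqΛc : (Ring.inverse Λh).comp (Ring.inverse Λh) = Ring.inverse Λ := by
    rw [← ContinuousLinearMap.mul_def]; exact hsqΛ
  -- Λ⁻¹ is positive
  have hiΛpos : (Ring.inverse Λ).IsPositive := by
    have h := hΛpos.adjoint_conj (Ring.inverse Λ)
    rw [hiΛ_sa] at h
    have he : (Ring.inverse Λ) ∘L (Λ ∘L Ring.inverse Λ) = Ring.inverse Λ := by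
      rw [← ContinuousLinearMap.mul_def, ← ContinuousLinearMap.mul_def, hΛiΛ, mul_one]
    rwa [he] at h
  -- P is positive, P - Λ is positive, P is invertible
  have hPpos : P.IsPositive := by
    have h := (ContinuousLinearMap.isPositive_one (E := ℓ²(𝒴))).conj_adjoint W
    have he : W ∘L ((1 : ℓ²(𝒴) →L[ℂ] ℓ²(𝒴)) ∘L adjoint W) = W.comp (adjoint W) := by
      simp [ContinuousLinearMap.one_def]
    rw [he] at h
    rwa [hP]
  have hG : P - Λ = Wt.comp (adjoint Wt) := by rw [hP, hΛ, sub_sub_cancel]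
  have hGpos : (P - Λ).IsPositive := by
    rw [hG]
    have h := (ContinuousLinearMap.isPositive_one (E := ℓ²(𝒰))).conj_adjoint Wt
    have he : Wt ∘L ((1 : ℓ²(𝒰) →L[ℂ] ℓ²(𝒰)) ∘L adjoint Wt) = Wt.comp (adjoint Wt) := by
      simp [ContinuousLinearMap.one_def]
    rwa [he] at h
  have hG_sa : adjoint (P - Λ) = P - Λ := by rw [map_sub, hP_sa, hΛ_sa]
  have hPu : IsUnit P := CStarAlgebra.isUnit_of_le Λ
    ((ContinuousLinearMap.le_def Λ P).mpr hGpos)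
    ⟨(ContinuousLinearMap.nonneg_iff_isPositive Λ).mpr hΛpos, hΛu⟩
  have hPiP : P * Ring.inverse P = 1 := Ring.mul_inverse_cancel P hPu
  have hiPP : Ring.inverse P * P = 1 := Ring.inverse_mul_cancel P hPu
  have hiP_sa : adjoint (Ring.inverse P) = Ring.inverse P := by
    rw [← ContinuousLinearMap.star_eq_adjoint, ← Ring.inverse_star,
      ContinuousLinearMap.star_eq_adjoint, hP_sa]
  ------------------------------------------------------------------
  -- Part 1 : τ₁
  ------------------------------------------------------------------
  set K₁ : 𝒰 →L[ℂ] 𝒰 := (adjoint Bt).comp ((Ring.inverse Λ).comp Bt) with hK₁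
  have hK₁pos : K₁.IsPositive := hiΛpos.adjoint_conj Bt
  have hM₁u : IsUnit (1 + K₁) := isUnit_one_add_of_isPositive hK₁pos
  have hRR : R * R = Ring.inverse (1 + K₁) := by
    rw [ContinuousLinearMap.mul_def, hR2]
  obtain ⟨hRMR, hRu⟩ := mul_middle_one hM₁u hRR
  set S₁ : 𝒰 →L[ℂ] 𝒵 := ((Ring.inverse Λh).comp Bt).comp R with hS₁
  have hAS : adjoint S₁ ∘L S₁ = R ∘L (K₁ ∘L R) := by
    rw [hS₁, hK₁]
    simp only [ContinuousLinearMap.adjoint_comp, hiΛh_sa, hR_sa,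
      ContinuousLinearMap.comp_assoc]
    rw [comp_comp_eq hsqΛc]
  have hstar1 : adjoint R ∘L R + adjoint S₁ ∘L S₁ = 1 := by
    rw [hAS, hR_sa]
    have he : R * R + R * (K₁ * R) = R * ((1 + K₁) * R) := by noncomm_ring
    show R * R + R * (K₁ * R) = 1
    rw [he, hRMR]
  have hiso1 : ∀ u : 𝒰, ‖(colC R (-S₁)) u‖ = ‖u‖ := by
    intro u
    apply colC_norm_apply
    have hneg : adjoint (-S₁) ∘L (-S₁) = adjoint S₁ ∘L S₁ := by
      rw [map_neg]; simp
    rw [hneg]; exact hstar1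
  have hR1 : R * ↑hRu.unit⁻¹ = 1 := hRu.mul_val_inv
  have hrange1 : Set.range (colC R (-S₁)) =
      {p : WithLp 2 (𝒰 × 𝒵) |
        Bt ((WithLp.equiv 2 (𝒰 × 𝒵)) p).1 + Λh ((WithLp.equiv 2 (𝒰 × 𝒵)) p).2 = 0} := by
    ext p
    simp only [Set.mem_range, Set.mem_setOf_eq]
    constructor
    · rintro ⟨u, rfl⟩
      rw [colC_fst, colC_snd]
      rw [hS₁]
      simp only [ContinuousLinearMap.neg_apply, ContinuousLinearMap.comp_apply]
      rw [map_neg, clm_cancel_apply hΛhiΛh]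
      simp
    · intro hp
      refine ⟨(↑hRu.unit⁻¹ : 𝒰 →L[ℂ] 𝒰) ((WithLp.equiv 2 (𝒰 × 𝒵)) p).1, ?_⟩
      apply (WithLp.equiv 2 (𝒰 × 𝒵)).injective
      apply Prod.ext
      · rw [colC_fst]
        exact clm_cancel_apply hR1 _
      · rw [colC_snd]
        rw [hS₁]
        simp only [ContinuousLinearMap.neg_apply, ContinuousLinearMap.comp_apply]
        rw [clm_cancel_apply hR1]
        rw [eq_neg_of_add_eq_zero_left hp, map_neg]
        rw [clm_cancel_apply hiΛhΛh, neg_neg]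
  ------------------------------------------------------------------
  -- Part 2 : τ₂
  ------------------------------------------------------------------
  set K₂ : ℰ →L[ℂ] ℰ :=
    C.comp (P.comp (((Ring.inverse Λ - Ring.inverse P)).comp (P.comp (adjoint C)))) with hK₂
  have hmid : P * Ring.inverse Λ * P - P
      = (P - Λ) * Ring.inverse Λ * (P - Λ) + (P - Λ) := by
    have e1 : P * Ring.inverse Λ * Λ = P := by rw [mul_assoc, hiΛΛ, mul_one]
    have e2 : Λ * Ring.inverse Λ * P = P := by rw [hΛiΛ, one_mul]
    have e3 : Λ * Ring.inverse Λ * Λ = Λ := by rw [hΛiΛ, one_mul]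
    have expand : (P - Λ) * Ring.inverse Λ * (P - Λ) + (P - Λ)
        = (P * Ring.inverse Λ * P - P * Ring.inverse Λ * Λ - Λ * Ring.inverse Λ * P
            + Λ * Ring.inverse Λ * Λ) + (P - Λ) := by noncomm_ring
    rw [expand, e1, e2, e3]; abel
  have hK₂alt : K₂ = C ∘L ((P * Ring.inverse Λ * P - P) ∘L adjoint C) := by
    rw [hK₂]
    congr 1
    rw [show (Ring.inverse Λ - Ring.inverse P).comp (P.comp (adjoint C))
        = ((Ring.inverse Λ - Ring.inverse P).comp P).comp (adjoint C) from
      (ContinuousLinearMap.comp_assoc _ _ _).symm]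
    rw [← ContinuousLinearMap.comp_assoc]
    congr 1
    show P * ((Ring.inverse Λ - Ring.inverse P) * P) = P * Ring.inverse Λ * P - P
    rw [sub_mul, hiPP, mul_sub, mul_one, ← mul_assoc]
  have hK₂pos : K₂.IsPositive := by
    rw [hK₂alt, hmid]
    have hdistrib : C ∘L (((P - Λ) * Ring.inverse Λ * (P - Λ) + (P - Λ)) ∘L adjoint C)
        = (C ∘L (P - Λ)) ∘L (Ring.inverse Λ) ∘L adjoint (C ∘L (P - Λ))
          + C ∘L ((P - Λ) ∘L adjoint C) := by
      rw [ContinuousLinearMap.adjoint_comp, hG_sa]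
      show C ∘L ((((P - Λ) ∘L Ring.inverse Λ ∘L (P - Λ)) + (P - Λ)) ∘L adjoint C) = _
      simp only [ContinuousLinearMap.add_comp, ContinuousLinearMap.comp_add,
        ContinuousLinearMap.comp_assoc]
    rw [hdistrib]
    exact (hiΛpos.conj_adjoint (C ∘L (P - Λ))).add (hGpos.conj_adjoint C)
  have hM₂u : IsUnit (1 + K₂) := isUnit_one_add_of_isPositive hK₂pos
  have hQQ : Q * Q = Ring.inverse (1 + K₂) := by
    rw [ContinuousLinearMap.mul_def, hQ2]
  obtain ⟨hQMQ, hQu⟩ := mul_middle_one hM₂u hQQ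
  have hN : (1 : ℰ →L[ℂ] ℰ) + K₂
      = D ∘L adjoint D + C.comp (P.comp ((Ring.inverse Λ).comp (P.comp (adjoint C)))) := by
    have h1 : D ∘L adjoint D = 1 - C.comp (P.comp (adjoint C)) := eq_sub_of_add_eq hCD1
    have h2 : C ∘L ((P * Ring.inverse Λ * P - P) ∘L adjoint C)
        = C.comp (P.comp ((Ring.inverse Λ).comp (P.comp (adjoint C))))
          - C.comp (P.comp (adjoint C)) := by
      simp only [ContinuousLinearMap.sub_comp, ContinuousLinearMap.comp_sub]
      congr 1
    rw [hK₂alt, h1, h2]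
    abel
  have hA2 : adjoint ((adjoint D).comp Q) ∘L ((adjoint D).comp Q)
      = Q ∘L ((D ∘L adjoint D) ∘L Q) := by
    simp only [ContinuousLinearMap.adjoint_comp, adjoint_adjoint, hQ_sa,
      ContinuousLinearMap.comp_assoc]
  have hB2 : adjoint ((Ring.inverse Λh).comp (P.comp ((adjoint C).comp Q)))
        ∘L ((Ring.inverse Λh).comp (P.comp ((adjoint C).comp Q)))
      = Q ∘L ((C.comp (P.comp ((Ring.inverse Λ).comp (P.comp (adjoint C))))) ∘L Q) := by
    simp only [ContinuousLinearMap.adjoint_comp, adjoint_adjoint, hQ_sa, hP_sa, hiΛh_sa,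
      ContinuousLinearMap.comp_assoc]
    rw [comp_comp_eq hsqΛc]
  have hstar2 : adjoint ((adjoint D).comp Q) ∘L ((adjoint D).comp Q)
      + adjoint ((Ring.inverse Λh).comp (P.comp ((adjoint C).comp Q)))
        ∘L ((Ring.inverse Λh).comp (P.comp ((adjoint C).comp Q))) = 1 := by
    rw [hA2, hB2]
    have he : Q ∘L ((D ∘L adjoint D) ∘L Q)
        + Q ∘L ((C.comp (P.comp ((Ring.inverse Λ).comp (P.comp (adjoint C))))) ∘L Q)
        = Q ∘L ((1 + K₂) ∘L Q) := by
      rw [hN]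
      simp only [ContinuousLinearMap.add_comp, ContinuousLinearMap.comp_add]
    rw [he]
    exact hQMQ
  have hiso2 : ∀ x : ℰ,
      ‖(colC ((adjoint D).comp Q)
        (((Ring.inverse Λh).comp (P.comp ((adjoint C).comp Q))))) x‖ = ‖x‖ := by
    intro x
    exact colC_norm_apply _ _ hstar2 x
  have hQ1 : Q * ↑hQu.unit⁻¹ = 1 := hQu.mul_val_inv
  -- adjoint of hCD5
  have h5a : (adjoint C).comp D + ((adjoint Z).comp (Ring.inverse P)).comp B = 0 := by
    have h := congrArg (fun (f : 𝒵 →L[ℂ] 𝒴) => ContinuousLinearMap.adjoint f) hCD5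
    simpa only [map_add, ContinuousLinearMap.adjoint_comp, adjoint_adjoint, hiP_sa,
      map_zero] using h
  have hrange2 : Set.range (colC ((adjoint D).comp Q)
        (((Ring.inverse Λh).comp (P.comp ((adjoint C).comp Q))))) =
      {p : WithLp 2 (𝒴 × 𝒵) |
        B ((WithLp.equiv 2 (𝒴 × 𝒵)) p).1 +
          Z (Λh (((WithLp.equiv 2 (𝒴 × 𝒵)) p).2)) = 0} := by
    ext p
    simp only [Set.mem_range, Set.mem_setOf_eq]
    constructor
    · rintro ⟨x, rfl⟩
      rw [colC_fst, colC_snd]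
      simp only [ContinuousLinearMap.comp_apply]
      rw [clm_cancel_apply hΛhiΛh]
      have h := ContinuousLinearMap.ext_iff.mp hCD2 (Q x)
      simpa only [ContinuousLinearMap.add_apply, ContinuousLinearMap.comp_apply,
        ContinuousLinearMap.zero_apply] using h
    · intro hp
      set p1 := ((WithLp.equiv 2 (𝒴 × 𝒵)) p).1 with hp1
      set p2 := ((WithLp.equiv 2 (𝒴 × 𝒵)) p).2 with hp2
      have h4 := ContinuousLinearMap.ext_iff.mp hCD4 p1
      simp only [ContinuousLinearMap.add_apply, ContinuousLinearMap.comp_apply,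
        ContinuousLinearMap.one_apply] at h4
      have h5 := ContinuousLinearMap.ext_iff.mp hCD5 (Λh p2)
      simp only [ContinuousLinearMap.add_apply, ContinuousLinearMap.comp_apply,
        ContinuousLinearMap.zero_apply] at h5
      have h5p := ContinuousLinearMap.ext_iff.mp h5a p1
      simp only [ContinuousLinearMap.add_apply, ContinuousLinearMap.comp_apply,
        ContinuousLinearMap.zero_apply] at h5p
      have h6 := ContinuousLinearMap.ext_iff.mp hCD6 (Λh p2)
      simp only [ContinuousLinearMap.add_apply, ContinuousLinearMap.comp_apply] at h6
      set w : ℰ := D p1 + C (Λh p2) with hw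
      have hDw : adjoint D w = p1 := by
        have hadd : adjoint B (Ring.inverse P (B p1))
            + adjoint B (Ring.inverse P (Z (Λh p2))) = 0 := by
          rw [← map_add, ← map_add, hp, map_zero, map_zero]
        have he : adjoint D w = (p1 - adjoint B (Ring.inverse P (B p1)))
            + (- adjoint B (Ring.inverse P (Z (Λh p2)))) := by
          rw [hw, map_add, eq_sub_of_add_eq h4, eq_neg_of_add_eq_zero_left h5]
        rw [he]
        have he2 : (p1 - adjoint B (Ring.inverse P (B p1)))
            + (- adjoint B (Ring.inverse P (Z (Λh p2))))
            = p1 - (adjoint B (Ring.inverse P (B p1))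
              + adjoint B (Ring.inverse P (Z (Λh p2)))) := by abel
        rw [he2, hadd, sub_zero]
      have hCw : adjoint C w = Ring.inverse P (Λh p2) := by
        have hadd : adjoint Z (Ring.inverse P (B p1))
            + adjoint Z (Ring.inverse P (Z (Λh p2))) = 0 := by
          rw [← map_add, ← map_add, hp, map_zero, map_zero]
        have he : adjoint C w = (- adjoint Z (Ring.inverse P (B p1)))
            + (Ring.inverse P (Λh p2) - adjoint Z (Ring.inverse P (Z (Λh p2)))) := by
          rw [hw, map_add, eq_neg_of_add_eq_zero_left h5p, eq_sub_of_add_eq h6]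
        rw [he]
        have he2 : (- adjoint Z (Ring.inverse P (B p1)))
            + (Ring.inverse P (Λh p2) - adjoint Z (Ring.inverse P (Z (Λh p2))))
            = Ring.inverse P (Λh p2) - (adjoint Z (Ring.inverse P (B p1))
              + adjoint Z (Ring.inverse P (Z (Λh p2)))) := by abel
        rw [he2, hadd, sub_zero]
      refine ⟨(↑hQu.unit⁻¹ : ℰ →L[ℂ] ℰ) w, ?_⟩
      apply (WithLp.equiv 2 (𝒴 × 𝒵)).injective
      apply Prod.ext
      · rw [colC_fst]
        simp only [ContinuousLinearMap.comp_apply]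
        rw [clm_cancel_apply hQ1, hDw]
      · rw [colC_snd]
        simp only [ContinuousLinearMap.comp_apply]
        rw [clm_cancel_apply hQ1, hCw, clm_cancel_apply hPiP, clm_cancel_apply hiΛhΛh]
  exact ⟨hiso1, hrange1, hiso2, hrange2⟩

end
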